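/- Nondomination commutes with unions of nondominated sets: Let I be a finite index set and let S_i ⊆ ℝ^K be a finite set for each i ∈ I. Then ND(⋃_{i ∈ I} ND(S_i)) = ND(⋃_{i ∈ I} S_i). -/

import Mathlib

open Pointwise

/-- `y` dominates `y'`: componentwise at least as large and not equal. -/
def dominates {K : ℕ} (y y' : Fin K → ℝ) : Prop :=
  (∀ k, y' k ≤ y k) ∧ y ≠ y'

/-- The nondominated subset of `S`. -/
def ND {K : ℕ} (S : Set (Fin K → ℝ)) : Set (Fin K → ℝ) :=
  {y ∈ S | ¬ ∃ y' ∈ S, dominates y' y}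

lemma dominates_iff_lt {K : ℕ} (y y' : Fin K → ℝ) : dominates y y' ↔ y' < y := by
  rw [lt_iff_le_and_ne]
  constructor
  · rintro ⟨h1, h2⟩; exact ⟨h1, fun h => h2 h.symm⟩
  · rintro ⟨h1, h2⟩; exact ⟨h1, fun h => h2 h.symm⟩

lemma exists_nd_ge {K : ℕ} {S : Set (Fin K → ℝ)} (hS : S.Finite) {y : Fin K → ℝ}
    (hy : y ∈ S) : ∃ z ∈ ND S, y ≤ z := by
  set T : Set (Fin K → ℝ) := {b ∈ S | y ≤ b} with hT
  have hTfin : T.Finite := hS.subset (fun b hb => hb.1)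
  obtain ⟨z, hzT, hzmax⟩ := Set.Finite.exists_maximalFor id T hTfin ⟨y, hy, le_refl y⟩
  refine ⟨z, ⟨hzT.1, ?_⟩, hzT.2⟩
  rintro ⟨w, hwS, hdom⟩
  rw [dominates_iff_lt] at hdom
  have hwT : w ∈ T := ⟨hwS, hzT.2.trans hdom.le⟩
  exact lt_irrefl z (hdom.trans_le (hzmax hwT hdom.le))

/-- **Nondomination commutes with unions of nondominated sets.**  For a finite index set
`ι` and finite sets `S i ⊆ ℝ^K`, `ND(⋃ i, ND(S i)) = ND(⋃ i, S i)`. -/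
theorem ND_iUnion_ND {K : ℕ} {ι : Type*} [Finite ι] (S : ι → Set (Fin K → ℝ))
    (hS : ∀ i, (S i).Finite) :
    ND (⋃ i, ND (S i)) = ND (⋃ i, S i) := by
  have hsub : (⋃ i, ND (S i)) ⊆ ⋃ i, S i := by
    exact Set.iUnion_mono fun i => fun y hy => hy.1
  ext y
  constructor
  · rintro ⟨hyV, hnd⟩
    refine ⟨hsub hyV, ?_⟩
    rintro ⟨w, hwU, hdom⟩
    rw [dominates_iff_lt] at hdom
    obtain ⟨i, hwS⟩ := Set.mem_iUnion.1 hwU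
    obtain ⟨z, hzND, hwz⟩ := exists_nd_ge (hS i) hwS
    exact hnd ⟨z, Set.mem_iUnion.2 ⟨i, hzND⟩,
      (dominates_iff_lt z y).2 (lt_of_lt_of_le hdom hwz)⟩
  · rintro ⟨hyU, hnd⟩
    obtain ⟨i, hyS⟩ := Set.mem_iUnion.1 hyU
    have hyND : y ∈ ND (S i) := by
      refine ⟨hyS, ?_⟩
      rintro ⟨w, hwS, hdom⟩
      exact hnd ⟨w, Set.mem_iUnion.2 ⟨i, hwS⟩, hdom⟩
    refine ⟨Set.mem_iUnion.2 ⟨i, hyND⟩, ?_⟩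
    rintro ⟨w, hwV, hdom⟩
    exact hnd ⟨w, hsub hwV, hdom⟩
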